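/- Fix G ∈ ℝ and U ∈ PSym(3). The Becker energy for Poisson number ν = 0, W(X) = 2G·( tr( X·(log X − 1) ) + 3 ), considered as a function of symmetric positive definite matrices X, is Fréchet differentiable at U with derivative H ↦ 2G · tr( log(U) · H ). In particular the Biot stress 2G·log(U) is the gradient of W with respect to U (Becker's law is hyperelastic when Λ = 0), and W(1) = 0. -/

import Mathlib

open Matrix

attribute [local instance]
  Matrix.frobeniusNormedAddCommGroup Matrix.frobeniusNormedSpace

/-- The principal matrix logarithm of a symmetric (positive definite) matrix, obtained by
applying the real logarithm to the eigenvalues in a spectral decomposition (junk value `0`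
on non-Hermitian input). -/
noncomputable def matLog (A : Matrix (Fin 3) (Fin 3) ℝ) : Matrix (Fin 3) (Fin 3) ℝ :=
  if hA : A.IsHermitian then hA.cfc Real.log else 0

/-- The Becker energy for Poisson number `ν = 0`:
`W(X) = 2G·(tr(X·(log X − 1)) + 3)`. -/
noncomputable def beckerEnergy (G : ℝ) (X : Matrix (Fin 3) (Fin 3) ℝ) : ℝ :=
  (2 * G) * ((X * (matLog X - 1)).trace + 3)

namespace BeckerAux

variable {A B : Matrix (Fin 3) (Fin 3) ℝ}

lemma cfc_real' (hA : A.IsHermitian) (f : ℝ → ℝ) :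
    hA.cfc f = (hA.eigenvectorUnitary : Matrix (Fin 3) (Fin 3) ℝ) *
      diagonal (f ∘ hA.eigenvalues) * star (hA.eigenvectorUnitary : Matrix (Fin 3) (Fin 3) ℝ) := by
  rw [Matrix.IsHermitian.cfc, RCLike.ofReal_real_eq_id]
  rfl

lemma my_cfc_mul (hA : A.IsHermitian) (f g : ℝ → ℝ) :
    hA.cfc f * hA.cfc g = hA.cfc (fun x => f x * g x) := by
  rw [cfc_real', cfc_real', cfc_real']
  set P := (hA.eigenvectorUnitary : Matrix (Fin 3) (Fin 3) ℝ)
  have h1 : star P * P = 1 := Unitary.coe_star_mul_self hA.eigenvectorUnitary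
  calc P * diagonal (f ∘ hA.eigenvalues) * star P * (P * diagonal (g ∘ hA.eigenvalues) * star P)
      = P * (diagonal (f ∘ hA.eigenvalues) * (star P * P) * diagonal (g ∘ hA.eigenvalues)) * star P := by
        simp only [mul_assoc]
    _ = P * diagonal (fun i => f (hA.eigenvalues i) * g (hA.eigenvalues i)) * star P := by
        rw [h1, mul_one, diagonal_mul_diagonal]; rfl
    _ = _ := rfl

lemma my_cfc_id (hA : A.IsHermitian) : hA.cfc id = A := by
  rw [cfc_real']; exact (hA.spectral_theorem).symm

lemma my_cfc_one (hA : A.IsHermitian) : hA.cfc (fun _ => 1) = 1 := by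
  rw [cfc_real']
  have : diagonal ((fun _ => (1:ℝ)) ∘ hA.eigenvalues) = 1 := by simp [Function.comp_def]
  rw [this, mul_one, Unitary.mul_star_self_of_mem hA.eigenvectorUnitary.prop]

lemma my_trace_cfc (hA : A.IsHermitian) (f : ℝ → ℝ) :
    (hA.cfc f).trace = ∑ i, f (hA.eigenvalues i) := by
  rw [cfc_real', trace_mul_comm, ← mul_assoc, Unitary.coe_star_mul_self, one_mul, trace_diagonal]
  rfl

lemma trace_diag_helper (d e : Fin 3 → ℝ) (M N : Matrix (Fin 3) (Fin 3) ℝ) :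
    (diagonal d * M * diagonal e * N).trace
      = ∑ i, ∑ j, d i * e j * (M i j * N j i) := by
  simp only [Matrix.trace, Matrix.diag, Matrix.mul_apply, Matrix.diagonal_apply,
    Finset.sum_mul, Finset.mul_sum, ite_mul, zero_mul, mul_ite, mul_zero,
    Finset.sum_ite_eq, Finset.sum_ite_eq', Finset.mem_univ, if_true]
  exact Finset.sum_congr rfl fun i _ => Finset.sum_congr rfl fun j _ => by ring

lemma trace_cfc_mul_cfc (hA : A.IsHermitian) (hB : B.IsHermitian) (f g : ℝ → ℝ) :
    (hA.cfc f * hB.cfc g).trace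
      = ∑ i, ∑ j, ((star (hA.eigenvectorUnitary : Matrix (Fin 3) (Fin 3) ℝ) *
          (hB.eigenvectorUnitary : Matrix (Fin 3) (Fin 3) ℝ)) i j)^2 *
          (f (hA.eigenvalues i) * g (hB.eigenvalues j)) := by
  set P := (hA.eigenvectorUnitary : Matrix (Fin 3) (Fin 3) ℝ) with hP
  set Q := (hB.eigenvectorUnitary : Matrix (Fin 3) (Fin 3) ℝ) with hQ
  set D1 := diagonal (f ∘ hA.eigenvalues) with hD1
  set D2 := diagonal (g ∘ hB.eigenvalues) with hD2
  have key : (hA.cfc f * hB.cfc g).trace = (D1 * (star P * Q) * D2 * star (star P * Q)).trace := by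
    rw [cfc_real' hA, cfc_real' hB]
    have e1 : P * D1 * star P * (Q * D2 * star Q) = (P * D1) * (star P * (Q * D2 * star Q)) := by
      simp only [mul_assoc]
    rw [e1, trace_mul_comm]
    have e2 : star P * (Q * D2 * star Q) * (P * D1)
        = ((star P * Q) * D2 * star (star P * Q)) * D1 := by
      simp only [StarMul.star_mul, star_star, mul_assoc]
    rw [e2, trace_mul_comm]
    simp only [mul_assoc]
  rw [key, hD1, hD2, trace_diag_helper]
  refine Finset.sum_congr rfl fun i _ => Finset.sum_congr rfl fun j _ => ?_
  have h3 : star (star P * Q) j i = (star P * Q) i j := by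
    rw [Matrix.star_eq_conjTranspose, Matrix.conjTranspose_apply, star_trivial]
  rw [h3]
  simp only [Function.comp_apply]
  ring

/-- column sums of the squared overlap matrix are 1 -/
lemma w_col_sum (hA : A.IsHermitian) (hB : B.IsHermitian) (j : Fin 3) :
    ∑ i, ((star (hA.eigenvectorUnitary : Matrix (Fin 3) (Fin 3) ℝ) *
      (hB.eigenvectorUnitary : Matrix (Fin 3) (Fin 3) ℝ)) i j)^2 = 1 := by
  set P := (hA.eigenvectorUnitary : Matrix (Fin 3) (Fin 3) ℝ)
  set Q := (hB.eigenvectorUnitary : Matrix (Fin 3) (Fin 3) ℝ)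
  have hm : star (star P * Q) * (star P * Q) = 1 := by
    have : star (star P * Q) = star Q * P := by rw [StarMul.star_mul, star_star]
    rw [this]
    calc star Q * P * (star P * Q) = star Q * (P * star P) * Q := by simp only [mul_assoc]
      _ = star Q * Q := by
          rw [Unitary.mul_star_self_of_mem hA.eigenvectorUnitary.prop, mul_one]
      _ = 1 := Unitary.coe_star_mul_self hB.eigenvectorUnitary
  have := congrFun (congrFun hm j) j
  rw [Matrix.mul_apply] at this
  rw [show ((1 : Matrix (Fin 3) (Fin 3) ℝ) j j) = 1 from Matrix.one_apply_eq j] at this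
  rw [← this]
  refine Finset.sum_congr rfl fun i _ => ?_
  simp [Matrix.star_apply, sq]

/-- row sums of the squared overlap matrix are 1 -/
lemma w_row_sum (hA : A.IsHermitian) (hB : B.IsHermitian) (i : Fin 3) :
    ∑ j, ((star (hA.eigenvectorUnitary : Matrix (Fin 3) (Fin 3) ℝ) *
      (hB.eigenvectorUnitary : Matrix (Fin 3) (Fin 3) ℝ)) i j)^2 = 1 := by
  set P := (hA.eigenvectorUnitary : Matrix (Fin 3) (Fin 3) ℝ)
  set Q := (hB.eigenvectorUnitary : Matrix (Fin 3) (Fin 3) ℝ)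
  have hm : (star P * Q) * star (star P * Q) = 1 := by
    have : star (star P * Q) = star Q * P := by rw [StarMul.star_mul, star_star]
    rw [this]
    calc star P * Q * (star Q * P) = star P * (Q * star Q) * P := by simp only [mul_assoc]
      _ = star P * P := by
          rw [Unitary.mul_star_self_of_mem hB.eigenvectorUnitary.prop, mul_one]
      _ = 1 := Unitary.coe_star_mul_self hA.eigenvectorUnitary
  have := congrFun (congrFun hm i) i
  rw [Matrix.mul_apply] at this
  rw [show ((1 : Matrix (Fin 3) (Fin 3) ℝ) i i) = 1 from Matrix.one_apply_eq i] at this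
  rw [← this]
  refine Finset.sum_congr rfl fun j _ => ?_
  simp [Matrix.star_apply, sq]

/-- Bregman divergence bounds for φ(t) = t log t - t -/
lemma bregman_bounds {a b : ℝ} (ha : 0 < a) (hb : 0 < b) :
    0 ≤ a * Real.log a - a * Real.log b - a + b ∧
      a * Real.log a - a * Real.log b - a + b ≤ (a - b)^2 / b := by
  constructor
  · have h1 : Real.log (b / a) ≤ b / a - 1 := Real.log_le_sub_one_of_pos (by positivity)
    rw [Real.log_div hb.ne' ha.ne'] at h1
    have h2 := mul_le_mul_of_nonneg_left h1 ha.le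
    have h3 : a * (b / a - 1) = b - a := by field_simp
    rw [h3] at h2
    nlinarith
  · have h1 : Real.log (a / b) ≤ a / b - 1 := Real.log_le_sub_one_of_pos (by positivity)
    rw [Real.log_div ha.ne' hb.ne'] at h1
    have h2 := mul_le_mul_of_nonneg_left h1 ha.le
    have h3 : a * (a / b - 1) - a + b = (a - b)^2 / b := by field_simp; ring
    nlinarith

/-- Frobenius norm squared as a trace -/
lemma norm_sq_eq_trace (A : Matrix (Fin 3) (Fin 3) ℝ) : ‖A‖^2 = (Aᵀ * A).trace := by
  have h0 : (0:ℝ) ≤ ∑ i, ∑ j, ‖A i j‖ ^ (2:ℝ) := by positivity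
  have h1 : ‖A‖^2 = ∑ i, ∑ j, (A i j)^2 := by
    rw [frobenius_norm_def, ← Real.rpow_two, ← Real.rpow_mul h0,
      show (1/2:ℝ)*2 = 1 by norm_num, Real.rpow_one]
    refine Finset.sum_congr rfl fun i _ => Finset.sum_congr rfl fun j _ => ?_
    rw [Real.rpow_two, Real.norm_eq_abs, sq_abs]
  rw [h1]
  simp only [Matrix.trace, Matrix.diag, Matrix.mul_apply, Matrix.transpose_apply]
  rw [Finset.sum_comm]
  exact Finset.sum_congr rfl fun i _ => Finset.sum_congr rfl fun j _ => pow_two _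

lemma matLog_eq (hA : A.IsHermitian) : matLog A = hA.cfc Real.log := dif_pos hA

/-- squared-overlap weights between the eigenbases of two hermitian matrices -/
noncomputable def w (hA : A.IsHermitian) (hB : B.IsHermitian) : Fin 3 → Fin 3 → ℝ :=
  fun i j => ((star (hA.eigenvectorUnitary : Matrix (Fin 3) (Fin 3) ℝ) *
      (hB.eigenvectorUnitary : Matrix (Fin 3) (Fin 3) ℝ)) i j)^2

lemma w_nonneg (hA : A.IsHermitian) (hB : B.IsHermitian) (i j : Fin 3) :
    0 ≤ w hA hB i j := sq_nonneg _

lemma w_sum_col (hA : A.IsHermitian) (hB : B.IsHermitian) (j : Fin 3) :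
    ∑ i, w hA hB i j = 1 := w_col_sum hA hB j

lemma w_sum_row (hA : A.IsHermitian) (hB : B.IsHermitian) (i : Fin 3) :
    ∑ j, w hA hB i j = 1 := w_row_sum hA hB i

lemma trace_cfc_mul_cfc' (hA : A.IsHermitian) (hB : B.IsHermitian) (f g : ℝ → ℝ) :
    (hA.cfc f * hB.cfc g).trace
      = ∑ i, ∑ j, w hA hB i j * (f (hA.eigenvalues i) * g (hB.eigenvalues j)) :=
  trace_cfc_mul_cfc hA hB f g

end BeckerAux


/-- For fixed `G` and positive definite `U`, the Becker energy
`W(X) = 2G·(tr(X·(log X − 1)) + 3)`, as a function on symmetric positive definite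
matrices, is Fréchet differentiable at `U` with derivative `H ↦ 2G·tr(log(U)·H)`
(so the Biot stress `2G·log U` is the gradient of `W`), and `W(1) = 0`. -/
theorem becker_energy_hyperelastic (G : ℝ)
    (U : Matrix (Fin 3) (Fin 3) ℝ) (hU : U.PosDef) :
    (∃ L : Matrix (Fin 3) (Fin 3) ℝ →L[ℝ] ℝ,
      (∀ H : Matrix (Fin 3) (Fin 3) ℝ, L H = (2 * G) * (matLog U * H).trace) ∧
      HasFDerivWithinAt (beckerEnergy G) L
        {X : Matrix (Fin 3) (Fin 3) ℝ | X.PosDef} U)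
    ∧ beckerEnergy G 1 = 0 := by
  classical
  have hUh : U.IsHermitian := hU.1
  have hlam_pos : ∀ i, 0 < hUh.eigenvalues i := fun i => hU.eigenvalues_pos i
  set lam := hUh.eigenvalues with hlamdef
  obtain ⟨ε, hε_pos, hε_le⟩ : ∃ ε : ℝ, 0 < ε ∧ ∀ i, ε ≤ lam i := by
    refine ⟨Finset.univ.inf' Finset.univ_nonempty lam, ?_, fun i => Finset.inf'_le _ (Finset.mem_univ i)⟩
    rw [Finset.lt_inf'_iff]
    exact fun i _ => hlam_pos i
  -- trace identities for U
  have TU : (U * (matLog U - 1)).trace = ∑ i, (lam i * Real.log (lam i) - lam i) := by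
    have e : hUh.cfc id * (hUh.cfc Real.log - hUh.cfc (fun _ => 1)) = U * (matLog U - 1) := by
      rw [BeckerAux.my_cfc_id hUh, BeckerAux.my_cfc_one hUh, ← BeckerAux.matLog_eq hUh]
    rw [← e, mul_sub, Matrix.trace_sub, BeckerAux.my_cfc_mul, BeckerAux.my_cfc_mul,
      BeckerAux.my_trace_cfc, BeckerAux.my_trace_cfc, ← Finset.sum_sub_distrib]
    simp [hlamdef]
  have T4 : (matLog U * U).trace = ∑ i, Real.log (lam i) * lam i := by
    have e : hUh.cfc Real.log * hUh.cfc id = matLog U * U := by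
      rw [BeckerAux.my_cfc_id hUh, ← BeckerAux.matLog_eq hUh]
    rw [← e, BeckerAux.my_cfc_mul, BeckerAux.my_trace_cfc]
    simp only [← hlamdef, id_eq]
  -- the key quantitative estimate
  have key : ∀ X : Matrix (Fin 3) (Fin 3) ℝ, X.PosDef →
      |beckerEnergy G X - beckerEnergy G U - (2*G) * (matLog U * (X - U)).trace|
        ≤ (2 * |G| * ε⁻¹) * ‖X - U‖^2 := by
    intro X hX
    have hXh : X.IsHermitian := hX.1
    have hmu_pos : ∀ j, 0 < hXh.eigenvalues j := fun j => hX.eigenvalues_pos j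
    set mu := hXh.eigenvalues with hmudef
    set ww := BeckerAux.w hUh hXh with hwdef
    have hw_nonneg : ∀ i j, 0 ≤ ww i j := BeckerAux.w_nonneg hUh hXh
    have hw_col : ∀ j, ∑ i, ww i j = 1 := BeckerAux.w_sum_col hUh hXh
    have hw_row : ∀ i, ∑ j, ww i j = 1 := BeckerAux.w_sum_row hUh hXh
    have conv1 : ∀ f : Fin 3 → ℝ, ∑ j, f j = ∑ i, ∑ j, ww i j * f j := by
      intro f
      rw [Finset.sum_comm]
      refine Finset.sum_congr rfl fun j _ => ?_
      rw [← Finset.sum_mul, hw_col j, one_mul]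
    have conv2 : ∀ f : Fin 3 → ℝ, ∑ i, f i = ∑ i, ∑ j, ww i j * f i := by
      intro f
      refine Finset.sum_congr rfl fun i _ => ?_
      rw [← Finset.sum_mul, hw_row i, one_mul]
    -- trace identities for X
    have TX : (X * (matLog X - 1)).trace = ∑ j, (mu j * Real.log (mu j) - mu j) := by
      have e : hXh.cfc id * (hXh.cfc Real.log - hXh.cfc (fun _ => 1)) = X * (matLog X - 1) := by
        rw [BeckerAux.my_cfc_id hXh, BeckerAux.my_cfc_one hXh, ← BeckerAux.matLog_eq hXh]
      rw [← e, mul_sub, Matrix.trace_sub, BeckerAux.my_cfc_mul, BeckerAux.my_cfc_mul,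
        BeckerAux.my_trace_cfc, BeckerAux.my_trace_cfc, ← Finset.sum_sub_distrib]
      simp [hmudef]
    have T3 : (matLog U * X).trace = ∑ i, ∑ j, ww i j * (Real.log (lam i) * mu j) := by
      have e : hUh.cfc Real.log * hXh.cfc id = matLog U * X := by
        rw [BeckerAux.my_cfc_id hXh, ← BeckerAux.matLog_eq hUh]
      rw [← e, BeckerAux.trace_cfc_mul_cfc' hUh hXh]
      simp only [← hlamdef, ← hmudef, ← hwdef, id_eq]
    have TUX : (U * X).trace = ∑ i, ∑ j, ww i j * (lam i * mu j) := by
      have e : hUh.cfc id * hXh.cfc id = U * X := by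
        rw [BeckerAux.my_cfc_id hXh, BeckerAux.my_cfc_id hUh]
      rw [← e, BeckerAux.trace_cfc_mul_cfc' hUh hXh]
      simp only [← hlamdef, ← hmudef, ← hwdef, id_eq]
    have TXX : (X * X).trace = ∑ j, mu j * mu j := by
      have e : hXh.cfc id * hXh.cfc id = X * X := by rw [BeckerAux.my_cfc_id hXh]
      rw [← e, BeckerAux.my_cfc_mul, BeckerAux.my_trace_cfc]
      simp only [← hmudef, id_eq]
    have TUU : (U * U).trace = ∑ i, lam i * lam i := by
      have e : hUh.cfc id * hUh.cfc id = U * U := by rw [BeckerAux.my_cfc_id hUh]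
      rw [← e, BeckerAux.my_cfc_mul, BeckerAux.my_trace_cfc]
      simp only [← hlamdef, id_eq]
    -- Frobenius norm of the difference
    have T5 : ‖X - U‖^2 = ∑ i, ∑ j, ww i j * (mu j - lam i)^2 := by
      rw [BeckerAux.norm_sq_eq_trace]
      have htr : (X - U)ᵀ = X - U := by
        rw [← Matrix.conjTranspose_eq_transpose_of_trivial]
        exact hXh.sub hUh
      rw [htr, sub_mul, mul_sub, mul_sub, Matrix.trace_sub, Matrix.trace_sub,
        Matrix.trace_sub, TXX, TUU, TUX, Matrix.trace_mul_comm X U, TUX,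
        conv1 (fun j => mu j * mu j), conv2 (fun i => lam i * lam i)]
      simp only [← Finset.sum_sub_distrib, ← Finset.sum_add_distrib]
      refine Finset.sum_congr rfl fun i _ => Finset.sum_congr rfl fun j _ => by ring
    -- the Bregman remainder
    set Sd := ∑ i, ∑ j, ww i j * (mu j * Real.log (mu j) - mu j * Real.log (lam i) - mu j + lam i)
      with hSddef
    have TB : (X * (matLog X - 1)).trace - (U * (matLog U - 1)).trace
        - ((matLog U * X).trace - (matLog U * U).trace) = Sd := by
      rw [TX, TU, T3, T4, conv1 (fun j => mu j * Real.log (mu j) - mu j),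
        conv2 (fun i => lam i * Real.log (lam i) - lam i),
        conv2 (fun i => Real.log (lam i) * lam i), hSddef]
      simp only [← Finset.sum_sub_distrib, ← Finset.sum_add_distrib]
      refine Finset.sum_congr rfl fun i _ => Finset.sum_congr rfl fun j _ => by ring
    have hSd_nonneg : 0 ≤ Sd := by
      refine Finset.sum_nonneg fun i _ => Finset.sum_nonneg fun j _ => mul_nonneg (hw_nonneg i j) ?_
      exact (BeckerAux.bregman_bounds (hmu_pos j) (hlam_pos i)).1
    have hSd_le : Sd ≤ ε⁻¹ * ‖X - U‖^2 := by
      rw [T5, Finset.mul_sum]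
      refine Finset.sum_le_sum fun i _ => ?_
      rw [Finset.mul_sum]
      refine Finset.sum_le_sum fun j _ => ?_
      have h1 := (BeckerAux.bregman_bounds (hmu_pos j) (hlam_pos i)).2
      have h2 : (mu j - lam i)^2 / lam i ≤ (mu j - lam i)^2 / ε :=
        div_le_div_of_nonneg_left (sq_nonneg _) hε_pos (hε_le i)
      calc ww i j * (mu j * Real.log (mu j) - mu j * Real.log (lam i) - mu j + lam i)
          ≤ ww i j * ((mu j - lam i)^2 / ε) :=
            mul_le_mul_of_nonneg_left (h1.trans h2) (hw_nonneg i j)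
        _ = ε⁻¹ * (ww i j * (mu j - lam i)^2) := by rw [div_eq_inv_mul]; ring
    have hDelta : beckerEnergy G X - beckerEnergy G U - (2*G) * (matLog U * (X - U)).trace
        = (2*G) * Sd := by
      simp only [beckerEnergy, mul_sub (matLog U) X U, Matrix.trace_sub]
      linear_combination (2*G) * TB
    rw [hDelta, abs_mul]
    have : |2*G| = 2 * |G| := by rw [abs_mul, abs_two]
    rw [this, abs_of_nonneg hSd_nonneg]
    calc 2 * |G| * Sd ≤ 2 * |G| * (ε⁻¹ * ‖X - U‖^2) :=
          mul_le_mul_of_nonneg_left hSd_le (by positivity)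
      _ = (2 * |G| * ε⁻¹) * ‖X - U‖^2 := by ring
  -- the continuous linear map
  let Llin : Matrix (Fin 3) (Fin 3) ℝ →ₗ[ℝ] ℝ :=
    { toFun := fun H => (2*G) * (matLog U * H).trace
      map_add' := fun x y => by
        simp only [Matrix.mul_add, Matrix.trace_add]; ring
      map_smul' := fun c x => by
        simp only [Matrix.mul_smul, Matrix.trace_smul, RingHom.id_apply, smul_eq_mul]; ring }
  have hLapp : ∀ H, (LinearMap.toContinuousLinearMap Llin) H = (2*G) * (matLog U * H).trace :=
    fun H => rfl
  constructor
  · refine ⟨LinearMap.toContinuousLinearMap Llin, hLapp, ?_⟩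
    refine hasFDerivWithinAt_iff_isLittleO.2 ?_
    rw [Asymptotics.isLittleO_iff]
    intro c hc
    set C := 2 * |G| * ε⁻¹ with hCdef
    have hC : 0 ≤ C := by positivity
    have hδ : 0 < c / (C+1) := by positivity
    have hball : ∀ᶠ X' in nhdsWithin U {X : Matrix (Fin 3) (Fin 3) ℝ | X.PosDef},
        ‖X' - U‖ < c / (C+1) := by
      refine Filter.Eventually.filter_mono nhdsWithin_le_nhds ?_
      filter_upwards [Metric.ball_mem_nhds U hδ] with y hy
      rwa [Metric.mem_ball, dist_eq_norm] at hy
    filter_upwards [hball, eventually_mem_nhdsWithin] with X hXd hXs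
    have h1 := key X hXs
    change ‖beckerEnergy G X - beckerEnergy G U - (2*G) * (matLog U * (X - U)).trace‖ ≤ c * ‖X - U‖
    have h2 : C * ‖X - U‖^2 ≤ c * ‖X - U‖ := by
      have h3 : C * ‖X - U‖ ≤ C * (c / (C+1)) := mul_le_mul_of_nonneg_left hXd.le hC
      have h4 : C * (c / (C+1)) ≤ c := by
        rw [div_eq_inv_mul]
        have : C * ((C+1)⁻¹ * c) = (C / (C+1)) * c := by rw [div_eq_inv_mul]; ring
        rw [this]
        have h5 : C / (C+1) ≤ 1 := by
          rw [div_le_one (by linarith)]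
          linarith
        nlinarith
      nlinarith [norm_nonneg (X - U)]
    rw [Real.norm_eq_abs]
    calc |beckerEnergy G X - beckerEnergy G U - (2*G) * (matLog U * (X - U)).trace|
        ≤ C * ‖X - U‖^2 := h1
      _ ≤ c * ‖X - U‖ := h2
  · -- beckerEnergy G 1 = 0
    have h1h : (1 : Matrix (Fin 3) (Fin 3) ℝ).IsHermitian := Matrix.isHermitian_one
    have heig : ∀ i, h1h.eigenvalues i = 1 := by
      intro i
      have h := h1h.conjStarAlgAut_star_eigenvectorUnitary
      rw [Unitary.conjStarAlgAut_star_apply] at h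
      rw [mul_one, Unitary.coe_star_mul_self] at h
      have h2 := congrFun (congrFun h i) i
      rw [Matrix.diagonal_apply_eq, Matrix.one_apply_eq] at h2
      simpa [RCLike.ofReal_real_eq_id] using h2.symm
    have hlog1 : (matLog 1 : Matrix (Fin 3) (Fin 3) ℝ).trace = 0 := by
      rw [BeckerAux.matLog_eq h1h, BeckerAux.my_trace_cfc]
      simp [heig]
    rw [beckerEnergy, one_mul, Matrix.trace_sub, hlog1, Matrix.trace_one]
    norm_num
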